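/- Let X, Y and Z be topological spaces and let f : X × Y → Z be a separately continuous function. If X is a Baire space, Z is a regular space, and y₀ ∈ Y is a W̃-point of Y, then f is quasi-continuous at each point of X × {y₀}. -/

import Mathlib

open Filter Set Topology

/-- `x` is a W̃-point: player I has a winning strategy in the game G̃(x), where player I
chooses arbitrary nonempty open sets and player II picks points in them; player I wins
when `x` is an accumulation point (cluster point) of the resulting sequence. -/
def IsWtildePoint {X : Type*} [TopologicalSpace X] (x : X) : Prop :=
  ∃ σ : List X → Set X,
    (∀ h : List X, IsOpen (σ h) ∧ (σ h).Nonempty) ∧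
    ∀ p : ℕ → X,
      (∀ n : ℕ, p n ∈ σ (List.ofFn fun i : Fin n => p i)) →
      MapClusterPt x atTop p

/-- `g` is quasi-continuous at `w₀`: for all open neighborhoods `U` of `w₀` and `V` of
`g w₀` there is a nonempty open `O ⊆ U` with `g '' O ⊆ V`. -/
def QuasiContinuousAt {W Z : Type*} [TopologicalSpace W] [TopologicalSpace Z]
    (g : W → Z) (w₀ : W) : Prop :=
  ∀ U : Set W, IsOpen U → w₀ ∈ U → ∀ V : Set Z, IsOpen V → g w₀ ∈ V →
    ∃ O : Set W, IsOpen O ∧ O.Nonempty ∧ O ⊆ U ∧ g '' O ⊆ V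


private def auxTree {α : Type*} (root : α) (child : α → Set α) : ℕ → Set α :=
  fun n => Nat.rec {root} (fun _ Tn => ⋃ ν ∈ Tn, child ν) n

private noncomputable def auxBranch {α : Type*} (root : α) (nxt : α → α) : ℕ → α :=
  fun n => Nat.rec root (fun _ ν => nxt ν) n

lemma aux_main {X Y : Type*} [TopologicalSpace X] [TopologicalSpace Y] [BaireSpace X]
    (A : Set X) (hAo : IsOpen A) (hAne : A.Nonempty)
    (B : Set Y) (σ : List Y → Set Y)
    (hσ : ∀ h : List Y, IsOpen (σ h) ∧ (σ h).Nonempty)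
    (Av : Y → Set X) (hAv : ∀ y, IsOpen (Av y))
    (hDF : ∀ h : List Y, (σ h ∩ B).Nonempty → ∀ J : Set X, IsOpen J → J.Nonempty → J ⊆ A →
      ∃ y ∈ σ h ∩ B, (Av y ∩ J).Nonempty) :
    ∃ (x : X) (p : ℕ → Y), x ∈ A ∧
      (∀ n : ℕ, p n ∈ σ (List.ofFn fun i : Fin n => p i)) ∧
      (∀ n : ℕ, p n ∈ B → x ∈ Av (p n)) := by
  classical
  -- Step 1: maximal antichains via Zorn
  have hM : ∀ (h : List Y) (G : Set X), ∃ M : Set (Y × Set X),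
      IsOpen G → G.Nonempty → G ⊆ A → (σ h ∩ B).Nonempty →
        ((∀ q ∈ M, q.1 ∈ σ h ∩ B ∧ IsOpen q.2 ∧ q.2.Nonempty ∧ q.2 ⊆ G ∧ q.2 ⊆ Av q.1) ∧
         (∀ q ∈ M, ∀ r ∈ M, q ≠ r → q.2 ∩ r.2 = ∅) ∧
         (∀ J : Set X, IsOpen J → J.Nonempty → J ⊆ G → ∃ q ∈ M, (q.2 ∩ J).Nonempty)) := by
    intro h G
    by_cases hc : IsOpen G ∧ G.Nonempty ∧ G ⊆ A ∧ (σ h ∩ B).Nonempty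
    · obtain ⟨hGo, hGne, hGA, hB⟩ := hc
      set S : Set (Set (Y × Set X)) :=
        {M | (∀ q ∈ M, q.1 ∈ σ h ∩ B ∧ IsOpen q.2 ∧ q.2.Nonempty ∧ q.2 ⊆ G ∧ q.2 ⊆ Av q.1) ∧
             (∀ q ∈ M, ∀ r ∈ M, q ≠ r → q.2 ∩ r.2 = ∅)} with hS
      obtain ⟨M, hMS⟩ : ∃ m, Maximal (fun x => x ∈ S) m := by
        apply zorn_subset
        intro c hcS hchain
        refine ⟨⋃₀ c, ⟨?_, ?_⟩, fun s hs => subset_sUnion_of_mem hs⟩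
        · rintro q ⟨m, hm, hq⟩
          exact (hcS hm).1 q hq
        · rintro q ⟨m, hm, hq⟩ r ⟨m', hm', hr⟩ hqr
          rcases eq_or_ne m m' with rfl | hne
          · exact (hcS hm).2 q hq r hr hqr
          · rcases hchain hm hm' hne with hsub | hsub
            · exact (hcS hm').2 q (hsub hq) r hr hqr
            · exact (hcS hm).2 q hq r (hsub hr) hqr
      refine ⟨M, fun _ _ _ _ => ⟨hMS.1.1, hMS.1.2, ?_⟩⟩
      intro J hJo hJne hJG
      by_contra hno
      push_neg at hno
      have hempty : ∀ q ∈ M, q.2 ∩ J = ∅ := hno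
      obtain ⟨y, hyB, hyne⟩ := hDF h hB J hJo hJne (hJG.trans hGA)
      set q' : Y × Set X := (y, Av y ∩ J) with hq'
      have hq'M : q' ∉ M := by
        intro hmem
        have := hempty q' hmem
        rw [hq'] at this
        simp only [inter_assoc, inter_self] at this
        exact hyne.ne_empty (by simpa [inter_assoc] using this)
      have hins : insert q' M ∈ S := by
        constructor
        · rintro q (rfl | hq)
          · exact ⟨hyB, (hAv y).inter hJo, hyne, inter_subset_right.trans hJG,
              inter_subset_left⟩
          · exact hMS.1.1 q hq
        · rintro q (rfl | hq) r (rfl | hr) hqr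
          · exact absurd rfl hqr
          · have := hempty r hr
            rw [hq']
            rw [eq_empty_iff_forall_notMem] at this ⊢
            rintro x ⟨⟨_, hxJ⟩, hxr⟩
            exact this x ⟨hxr, hxJ⟩
          · have := hempty q hq
            rw [hq']
            rw [eq_empty_iff_forall_notMem] at this ⊢
            rintro x ⟨hxq, _, hxJ⟩
            exact this x ⟨hxq, hxJ⟩
          · exact hMS.1.2 q hq r hr hqr
      have : insert q' M = M := by
        have := hMS.2 hins (subset_insert q' M)
        exact subset_antisymm this (subset_insert q' M)
      exact hq'M (this ▸ mem_insert q' M)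
    · exact ⟨∅, fun h1 h2 h3 h4 => absurd ⟨h1, h2, h3, h4⟩ hc⟩
  choose Mf hMf using hM
  -- Step 2: the tree
  let pick : List Y → Y := fun h => (hσ h).2.choose
  have hpick : ∀ h, pick h ∈ σ h := fun h => (hσ h).2.choose_spec
  let C : (List Y × Set X) → Set (List Y × Set X) := fun ν =>
    {μ | ((σ ν.1 ∩ B).Nonempty ∧ ∃ q ∈ Mf ν.1 ν.2, μ = (ν.1 ++ [q.1], q.2)) ∨
         (¬(σ ν.1 ∩ B).Nonempty ∧ μ = (ν.1 ++ [pick ν.1], ν.2))}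
  let T : ℕ → Set (List Y × Set X) := auxTree (([] : List Y), A) C
  have hT0 : T 0 = {(([] : List Y), A)} := rfl
  have hTs : ∀ n, T (n + 1) = ⋃ ν ∈ T n, C ν := fun n => rfl
  have inv1 : ∀ n, ∀ ν ∈ T n, IsOpen ν.2 ∧ ν.2.Nonempty ∧ ν.2 ⊆ A := by
    intro n
    induction n with
    | zero =>
      intro ν hν
      rw [hT0, mem_singleton_iff] at hν
      subst hν
      exact ⟨hAo, hAne, subset_rfl⟩
    | succ n ih =>
      intro ν hν
      rw [hTs, mem_iUnion₂] at hν
      obtain ⟨α, hα, hνC⟩ := hν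
      obtain ⟨hαo, hαne, hαA⟩ := ih α hα
      rcases hνC with ⟨hBne, q, hqM, rfl⟩ | ⟨-, rfl⟩
      · obtain ⟨hprops, -, -⟩ := hMf α.1 α.2 hαo hαne hαA hBne
        obtain ⟨-, hqo, hqne, hqG, -⟩ := hprops q hqM
        exact ⟨hqo, hqne, hqG.trans hαA⟩
      · exact ⟨hαo, hαne, hαA⟩
  have hchild : ∀ n, ∀ α ∈ T n, ∀ μ ∈ C α, μ.2 ⊆ α.2 ∧
      ∃ y, μ.1 = α.1 ++ [y] ∧ y ∈ σ α.1 ∧ (y ∈ B → μ.2 ⊆ Av y) := by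
    intro n α hα μ hμ
    obtain ⟨hαo, hαne, hαA⟩ := inv1 n α hα
    rcases hμ with ⟨hBne, q, hqM, rfl⟩ | ⟨hBe, rfl⟩
    · obtain ⟨hprops, -, -⟩ := hMf α.1 α.2 hαo hαne hαA hBne
      obtain ⟨hqσB, hqo, hqne, hqG, hqAv⟩ := hprops q hqM
      exact ⟨hqG, q.1, rfl, hqσB.1, fun _ => hqAv⟩
    · exact ⟨subset_rfl, pick α.1, rfl, hpick α.1,
        fun hyB => absurd ⟨pick α.1, hpick α.1, hyB⟩ hBe⟩
  have inv2 : ∀ n, ∀ ν ∈ T n, ∀ μ ∈ T n, ν ≠ μ → ν.2 ∩ μ.2 = ∅ := by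
    intro n
    induction n with
    | zero =>
      intro ν hν μ hμ hne
      rw [hT0, mem_singleton_iff] at hν hμ
      exact absurd (hν.trans hμ.symm) hne
    | succ n ih =>
      intro ν hν μ hμ hne
      rw [hTs, mem_iUnion₂] at hν hμ
      obtain ⟨α, hα, hνC⟩ := hν
      obtain ⟨β, hβ, hμC⟩ := hμ
      rcases eq_or_ne α β with rfl | hab
      · obtain ⟨hαo, hαne, hαA⟩ := inv1 n α hα
        rcases hνC with ⟨hBne, q, hqM, rfl⟩ | ⟨hBe, rfl⟩
        · rcases hμC with ⟨-, r, hrM, rfl⟩ | ⟨hBe, -⟩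
          · rcases eq_or_ne q r with rfl | hqr
            · exact absurd rfl hne
            · exact (hMf α.1 α.2 hαo hαne hαA hBne).2.1 q hqM r hrM hqr
          · exact absurd hBne hBe
        · rcases hμC with ⟨hBne, -⟩ | ⟨-, rfl⟩
          · exact absurd hBne hBe
          · exact absurd rfl hne
      · have h1 := (hchild n α hα ν hνC).1
        have h2 := (hchild n β hβ μ hμC).1
        have h3 := ih α hα β hβ hab
        rw [eq_empty_iff_forall_notMem] at h3 ⊢
        intro x hx
        exact h3 x ⟨h1 hx.1, h2 hx.2⟩
  have dens : ∀ n, ∀ Q : Set X, IsOpen Q → (Q ∩ A).Nonempty →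
      (Q ∩ ⋃ ν ∈ T n, ν.2).Nonempty := by
    intro n
    induction n with
    | zero =>
      intro Q hQo hQA
      rw [hT0]
      simpa using hQA
    | succ n ih =>
      intro Q hQo hQA
      obtain ⟨x, hxQ, hxU⟩ := ih Q hQo hQA
      rw [mem_iUnion₂] at hxU
      obtain ⟨α, hα, hxα⟩ := hxU
      obtain ⟨hαo, hαne, hαA⟩ := inv1 n α hα
      by_cases hBne : (σ α.1 ∩ B).Nonempty
      · obtain ⟨-, -, hdens⟩ := hMf α.1 α.2 hαo hαne hαA hBne
        obtain ⟨q, hqM, hqJ⟩ := hdens (Q ∩ α.2) (hQo.inter hαo) ⟨x, hxQ, hxα⟩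
          inter_subset_right
        obtain ⟨z, hzq, hzQ, hzα⟩ := hqJ
        refine ⟨z, hzQ, ?_⟩
        rw [mem_iUnion₂]
        refine ⟨(α.1 ++ [q.1], q.2), ?_, hzq⟩
        rw [hTs, mem_iUnion₂]
        exact ⟨α, hα, Or.inl ⟨hBne, q, hqM, rfl⟩⟩
      · refine ⟨x, hxQ, ?_⟩
        rw [mem_iUnion₂]
        refine ⟨(α.1 ++ [pick α.1], α.2), ?_, hxα⟩
        rw [hTs, mem_iUnion₂]
        exact ⟨α, hα, Or.inr ⟨hBne, rfl⟩⟩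
  -- Step 3: Baire
  let D : ℕ → Set X := fun n => (⋃ ν ∈ T n, ν.2) ∪ (closure A)ᶜ
  have hDo : ∀ n, IsOpen (D n) := fun n =>
    (isOpen_biUnion fun ν hν => (inv1 n ν hν).1).union isClosed_closure.isOpen_compl
  have hDd : ∀ n, Dense (D n) := by
    intro n
    rw [dense_iff_inter_open]
    intro Q hQo hQne
    by_cases hQA : (Q ∩ A).Nonempty
    · exact (dens n Q hQo hQA).imp fun x hx => ⟨hx.1, Or.inl hx.2⟩
    · refine hQne.imp fun x hx => ⟨hx, Or.inr ?_⟩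
      intro hxcl
      exact hQA (mem_closure_iff.mp hxcl Q hQo hx)
  have hDense : Dense (⋂ n, D n) := dense_iInter_of_isOpen hDo hDd
  obtain ⟨xs, hxsA, hxsD⟩ := hDense.inter_open_nonempty A hAo hAne
  have hxsD' : ∀ n, xs ∈ ⋃ ν ∈ T n, ν.2 := by
    intro n
    rcases mem_iInter.mp hxsD n with h | h
    · exact h
    · exact absurd (subset_closure hxsA) h
  have trace : ∀ n, ∀ ν ∈ T n, xs ∈ ν.2 → ∃ μ, μ ∈ C ν ∧ xs ∈ μ.2 := by
    intro n ν hν hxν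
    have h1 := hxsD' (n + 1)
    rw [mem_iUnion₂] at h1
    obtain ⟨μ, hμ, hxμ⟩ := h1
    rw [hTs, mem_iUnion₂] at hμ
    obtain ⟨β, hβ, hμC⟩ := hμ
    have hsubβ := (hchild n β hβ μ hμC).1
    rcases eq_or_ne β ν with rfl | hbn
    · exact ⟨μ, hμC, hxμ⟩
    · have h2 := inv2 n β hβ ν hν hbn
      rw [eq_empty_iff_forall_notMem] at h2
      exact absurd ⟨hsubβ hxμ, hxν⟩ (h2 xs)
  -- Step 4: the branch
  let nxt : (List Y × Set X) → (List Y × Set X) := fun ν =>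
    if h : ∃ μ, μ ∈ C ν ∧ xs ∈ μ.2 then h.choose else ν
  let F : ℕ → (List Y × Set X) := auxBranch (([] : List Y), A) nxt
  have hF0 : F 0 = ((([] : List Y), A) : List Y × Set X) := rfl
  have hFs : ∀ n, F (n + 1) = nxt (F n) := fun n => rfl
  have key : ∀ n, F n ∈ T n ∧ xs ∈ (F n).2 := by
    intro n
    induction n with
    | zero =>
      refine ⟨?_, ?_⟩
      · rw [hF0, hT0]; exact mem_singleton _
      · rw [hF0]; exact hxsA
    | succ n ih =>
      have hex : ∃ μ, μ ∈ C (F n) ∧ xs ∈ μ.2 := trace n (F n) ih.1 ih.2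
      have hFn1 : F (n + 1) = hex.choose := by
        rw [hFs n]
        show (if h : ∃ μ, μ ∈ C (F n) ∧ xs ∈ μ.2 then h.choose else F n) = hex.choose
        rw [dif_pos hex]
      refine ⟨?_, ?_⟩
      · rw [hTs, mem_iUnion₂]
        refine ⟨F n, ih.1, ?_⟩
        rw [hFn1]
        exact hex.choose_spec.1
      · rw [hFn1]
        exact hex.choose_spec.2
  have keyC : ∀ n, F (n + 1) ∈ C (F n) := by
    intro n
    have hex : ∃ μ, μ ∈ C (F n) ∧ xs ∈ μ.2 := trace n (F n) (key n).1 (key n).2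
    have hFn1 : F (n + 1) = hex.choose := by
      rw [hFs n]
      show (if h : ∃ μ, μ ∈ C (F n) ∧ xs ∈ μ.2 then h.choose else F n) = hex.choose
      rw [dif_pos hex]
    rw [hFn1]
    exact hex.choose_spec.1
  have hstep : ∀ n, ∃ y, (F (n + 1)).1 = (F n).1 ++ [y] ∧ y ∈ σ (F n).1 ∧
      (y ∈ B → (F (n + 1)).2 ⊆ Av y) := by
    intro n
    obtain ⟨-, y, hy1, hy2, hy3⟩ := hchild n (F n) (key n).1 (F (n + 1)) (keyC n)
    exact ⟨y, hy1, hy2, hy3⟩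
  choose p hp1 hp2 hp3 using hstep
  have hlist : ∀ n, (F n).1 = List.ofFn (fun i : Fin n => p i) := by
    intro n
    induction n with
    | zero => rw [hF0]; simp
    | succ n ih =>
      rw [hp1 n, ih, List.ofFn_succ']
      simp [List.concat_eq_append]
  refine ⟨xs, p, hxsA, ?_, ?_⟩
  · intro n
    rw [← hlist n]
    exact hp2 n
  · intro n hB
    exact hp3 n hB (key (n + 1)).2


theorem quasiContinuousAt_of_wtilde_point' {X Y Z : Type*} [TopologicalSpace X]
    [TopologicalSpace Y] [TopologicalSpace Z] [BaireSpace X] [RegularSpace Z]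
    (f : X × Y → Z)
    (hf₁ : ∀ x : X, Continuous fun y : Y => f (x, y))
    (hf₂ : ∀ y : Y, Continuous fun x : X => f (x, y))
    (y₀ : Y) (hy₀ : ∃ σ : List Y → Set Y,
      (∀ h : List Y, IsOpen (σ h) ∧ (σ h).Nonempty) ∧
      ∀ p : ℕ → Y,
        (∀ n : ℕ, p n ∈ σ (List.ofFn fun i : Fin n => p i)) →
        MapClusterPt y₀ atTop p) :
    ∀ x : X, ∀ U : Set (X × Y), IsOpen U → (x, y₀) ∈ U → ∀ V : Set Z, IsOpen V →
      f (x, y₀) ∈ V →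
      ∃ O : Set (X × Y), IsOpen O ∧ O.Nonempty ∧ O ⊆ U ∧ f '' O ⊆ V := by
  obtain ⟨σ, hσ, hwin⟩ := hy₀
  intro x U hU hxU V hV hfV
  by_contra hcon
  push_neg at hcon
  have hVnhds : V ∈ 𝓝 (f (x, y₀)) := hV.mem_nhds hfV
  obtain ⟨t, htn, htc, htV⟩ := exists_mem_nhds_isClosed_subset hVnhds
  set W : Set Z := interior t with hWdef
  have hWo : IsOpen W := isOpen_interior
  have hfW : f (x, y₀) ∈ W := mem_interior_iff_mem_nhds.mpr htn
  have hclW : closure W ⊆ V := by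
    calc closure W ⊆ closure t := closure_mono interior_subset
    _ = t := htc.closure_eq
    _ ⊆ V := htV
  obtain ⟨A₀, B, hA₀o, hBo, hxA₀, hy₀B, hABU⟩ := isOpen_prod_iff.mp hU x y₀ hxU
  set A : Set X := A₀ ∩ (fun x' => f (x', y₀)) ⁻¹' W with hAdef
  have hAo : IsOpen A := hA₀o.inter (hWo.preimage (hf₂ y₀))
  have hxA : x ∈ A := ⟨hxA₀, hfW⟩
  set Av : Y → Set X := fun y => (fun x' => f (x', y)) ⁻¹' (closure W)ᶜ with hAvdef
  have hAv : ∀ y, IsOpen (Av y) := fun y =>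
    (isClosed_closure.isOpen_compl).preimage (hf₂ y)
  have hDF : ∀ h : List Y, (σ h ∩ B).Nonempty → ∀ J : Set X, IsOpen J → J.Nonempty →
      J ⊆ A → ∃ y ∈ σ h ∩ B, (Av y ∩ J).Nonempty := by
    intro h hBne J hJo hJne hJA
    by_contra hno
    push_neg at hno
    have hsubV : f '' (J ×ˢ (σ h ∩ B)) ⊆ V := by
      rintro z ⟨⟨x', y'⟩, ⟨hx'J, hy'⟩, rfl⟩
      have hnotin : x' ∉ Av y' := by
        intro hx'
        have he := hno y' hy'
        rw [eq_empty_iff_forall_notMem] at he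
        exact he x' ⟨hx', hx'J⟩
      have hmem : f (x', y') ∈ closure W := by
        by_contra hc
        exact hnotin hc
      exact hclW hmem
    exact hcon (J ×ˢ (σ h ∩ B)) (hJo.prod ((hσ h).1.inter hBo))
      (hJne.prod hBne) (fun q hq => hABU ⟨(hJA hq.1).1, hq.2.2⟩) hsubV
  obtain ⟨xs, p, hxsA, hlegal, havoid⟩ := aux_main A hAo ⟨x, hxA⟩ B σ hσ Av hAv hDF
  have hclus : MapClusterPt y₀ atTop p := hwin p hlegal
  have hNo : IsOpen (B ∩ (fun y => f (xs, y)) ⁻¹' W) := hBo.inter (hWo.preimage (hf₁ xs))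
  have hy₀N : y₀ ∈ B ∩ (fun y => f (xs, y)) ⁻¹' W := ⟨hy₀B, hxsA.2⟩
  have hfreq := (mapClusterPt_iff_frequently.mp hclus) _ (hNo.mem_nhds hy₀N)
  obtain ⟨n, hn⟩ := hfreq.exists
  have h1 : xs ∈ Av (p n) := havoid n hn.1
  have h2 : f (xs, p n) ∈ closure W := subset_closure hn.2
  exact h1 h2

/-- If `f : X × Y → Z` is separately continuous, `X` is a Baire space, `Z` is regular
and `y₀` is a W̃-point of `Y`, then `f` is quasi-continuous at every point of
`X × {y₀}`. -/
theorem quasiContinuousAt_of_wtilde_point {X Y Z : Type*} [TopologicalSpace X]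
    [TopologicalSpace Y] [TopologicalSpace Z] [BaireSpace X] [RegularSpace Z]
    (f : X × Y → Z)
    (hf₁ : ∀ x : X, Continuous fun y : Y => f (x, y))
    (hf₂ : ∀ y : Y, Continuous fun x : X => f (x, y))
    (y₀ : Y) (hy₀ : IsWtildePoint y₀) :
    ∀ x : X, QuasiContinuousAt f (x, y₀) := by
  intro x U hU hxU V hV hfV
  exact quasiContinuousAt_of_wtilde_point' f hf₁ hf₂ y₀ hy₀ x U hU hxU V hV hfV
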